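/- Let A and B be real random variables on a probability space with B > 0 almost surely, satisfying E[exp(λA − λ²B²/2)] ≤ 1 for all λ ∈ ℝ. Then for all real x ≥ √2 and y > 0, P( |A| / √( (B² + y)(1 + (1/2)·log(B²/y + 1)) ) ≥ x ) ≤ exp(−x²/2). -/

import Mathlib

open MeasureTheory Real
open scoped ENNReal

lemma integrable_rexp_quad {c : ℝ} (hc : 0 < c) (a : ℝ) :
    Integrable (fun x : ℝ => Real.exp (-c * x ^ 2 + a * x)) := by
  have h := integrable_cexp_quadratic (b := (c : ℂ)) (by simpa using hc) (a : ℂ) 0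
  refine h.re.congr (Filter.Eventually.of_forall fun x => ?_)
  have h0 : ((-c : ℂ)) * x ^ 2 + (a:ℂ) * x + 0 = ((-c * x ^ 2 + a * x : ℝ) : ℂ) := by
    push_cast; ring
  show (Complex.exp _).re = _
  rw [h0, Complex.exp_ofReal_re]

lemma integral_rexp_quad {c : ℝ} (hc : 0 < c) (a : ℝ) :
    ∫ x : ℝ, Real.exp (-c * x ^ 2 + a * x) = Real.sqrt (π / c) * Real.exp (a ^ 2 / (4 * c)) := by
  have h := integral_cexp_quadratic (b := (-c : ℂ)) (by simpa using hc) (a : ℂ) 0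
  have hL : ∫ x : ℝ, Complex.exp ((-c : ℂ) * x ^ 2 + (a:ℂ) * x + 0)
      = ((∫ x : ℝ, Real.exp (-c * x ^ 2 + a * x) : ℝ) : ℂ) := by
    have h0 : ∀ x : ℝ, Complex.exp ((-c : ℂ) * x ^ 2 + (a:ℂ) * x + 0)
        = ((Real.exp (-c * x ^ 2 + a * x) : ℝ) : ℂ) := fun x => by
      rw [show ((-c : ℂ)) * x ^ 2 + (a:ℂ) * x + 0 = ((-c * x ^ 2 + a * x : ℝ) : ℂ) by
        push_cast; ring, Complex.ofReal_exp]
    simp_rw [h0]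
    exact integral_ofReal
  rw [hL] at h
  have hR : ((π : ℂ) / -(-c : ℂ)) ^ (1 / 2 : ℂ) * Complex.exp (0 - (a:ℂ) ^ 2 / (4 * (-c : ℂ)))
      = ((Real.sqrt (π / c) * Real.exp (a ^ 2 / (4 * c)) : ℝ) : ℂ) := by
    have h1 : ((π : ℂ) / -(-c : ℂ)) = ((π / c : ℝ) : ℂ) := by push_cast; ring_nf
    have h2 : (0 - (a:ℂ) ^ 2 / (4 * (-c : ℂ))) = ((a ^ 2 / (4 * c) : ℝ) : ℂ) := by
      push_cast; field_simp; ring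
    have h3 : ((π / c : ℝ) : ℂ) ^ (1 / 2 : ℂ) = ((Real.sqrt (π / c) : ℝ) : ℂ) := by
      rw [show (1 / 2 : ℂ) = ((1 / 2 : ℝ) : ℂ) by norm_num,
        ← Complex.ofReal_cpow (by positivity), Real.sqrt_eq_rpow]
    rw [h1, h2, h3, ← Complex.ofReal_exp, ← Complex.ofReal_mul]
  rw [hR] at h
  exact_mod_cast h

/-- pointwise inequality on the event -/
lemma event_ineq {a b x y : ℝ} (hy : 0 < y) (hx : Real.sqrt 2 ≤ x)
    (h : x ≤ |a| / Real.sqrt ((b ^ 2 + y) * (1 + (1 / 2) * Real.log (b ^ 2 / y + 1)))) :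
    Real.sqrt (2 * π / y) * Real.exp (x ^ 2 / 2)
      ≤ Real.sqrt (2 * π / (b ^ 2 + y)) * Real.exp (a ^ 2 / (2 * (b ^ 2 + y))) := by
  have hπ := Real.pi_pos
  set s := b ^ 2 + y with hs_def
  have hs : 0 < s := by positivity
  set L := Real.log (b ^ 2 / y + 1) with hL_def
  have hL : 0 ≤ L := Real.log_nonneg (by have := div_nonneg (sq_nonneg b) hy.le; linarith)
  have ht : (1:ℝ) ≤ 1 + (1/2) * L := by linarith
  have hst : 0 < s * (1 + (1/2) * L) := by nlinarith
  have hx0 : 0 ≤ x := le_trans (Real.sqrt_nonneg 2) hx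
  have hx2 : (2:ℝ) ≤ x ^ 2 := by
    nlinarith [Real.sq_sqrt (by norm_num : (0:ℝ) ≤ 2), Real.sqrt_nonneg 2]
  -- from event: x * sqrt(s*t) ≤ |a|
  have h1 : x * Real.sqrt (s * (1 + (1/2) * L)) ≤ |a| := by
    rw [le_div_iff₀ (Real.sqrt_pos.mpr hst)] at h
    exact h
  have h2 : x ^ 2 * (s * (1 + (1/2) * L)) ≤ a ^ 2 := by
    have := mul_le_mul h1 h1 (by positivity) (abs_nonneg a)
    calc x ^ 2 * (s * (1 + (1/2) * L))
        = (x * Real.sqrt (s * (1 + (1/2) * L))) * (x * Real.sqrt (s * (1 + (1/2) * L))) := by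
          rw [show ∀ u v : ℝ, (u*v)*(u*v) = u^2 * (v*v) by intros; ring,
            Real.mul_self_sqrt hst.le]
      _ ≤ |a| * |a| := this
      _ = a ^ 2 := by rw [← abs_mul, ← sq, abs_sq]
  -- key exponent inequality : x^2/2 + L/2 ≤ a^2/(2s)
  have h3 : x ^ 2 / 2 + L / 2 ≤ a ^ 2 / (2 * s) := by
    rw [le_div_iff₀ (by positivity)]
    nlinarith [mul_nonneg hL (sub_nonneg.mpr hx2), hs.le]
  -- sqrt(2π/s) = sqrt(2π/y) * exp(-L/2)
  have hsy : s / y = b ^ 2 / y + 1 := by field_simp; exact hs_def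
  have h4 : Real.sqrt (2 * π / s) = Real.sqrt (2 * π / y) * Real.exp (-(L/2)) := by
    have hexp : Real.exp (L / 2) = Real.sqrt (s / y) := by
      rw [hL_def, ← hsy, ← Real.log_sqrt (by positivity), Real.exp_log (by positivity)]
    have : Real.sqrt (2 * π / s) * Real.exp (L / 2) = Real.sqrt (2 * π / y) := by
      rw [hexp, ← Real.sqrt_mul (by positivity)]
      congr 1
      field_simp
    rw [← this, Real.exp_neg, mul_assoc, mul_inv_cancel₀ (Real.exp_ne_zero _), mul_one]
  rw [h4]
  calc Real.sqrt (2 * π / y) * Real.exp (x ^ 2 / 2)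
      = Real.sqrt (2 * π / y) * Real.exp (-(L/2)) * Real.exp (x ^ 2 / 2 + L / 2) := by
        rw [mul_assoc, ← Real.exp_add]; ring_nf
    _ ≤ Real.sqrt (2 * π / y) * Real.exp (-(L/2)) * Real.exp (a ^ 2 / (2 * s)) := by
        apply mul_le_mul_of_nonneg_left (Real.exp_le_exp.mpr h3) (by positivity)

/-- Corollary 2.2, the tail bound (2.4). -/
theorem stmt_3 {Ω : Type*} {mΩ : MeasurableSpace Ω} {μ : Measure Ω}
    [IsProbabilityMeasure μ]
    (A B : Ω → ℝ) (hA : Measurable A) (hB : Measurable B)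
    (hBpos : ∀ᵐ ω ∂μ, 0 < B ω)
    (h14 : ∀ lam : ℝ,
      ∫⁻ ω, ENNReal.ofReal (Real.exp (lam * A ω - lam ^ 2 * (B ω) ^ 2 / 2)) ∂μ ≤ 1)
    (x y : ℝ) (hx : Real.sqrt 2 ≤ x) (hy : 0 < y) :
    μ {ω | x ≤ |A ω| /
        Real.sqrt (((B ω) ^ 2 + y) * (1 + (1 / 2) * Real.log ((B ω) ^ 2 / y + 1)))} ≤
      ENNReal.ofReal (Real.exp (-x ^ 2 / 2)) := by
  have hπ := Real.pi_pos
  set g : Ω → ℝ := fun ω =>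
    Real.sqrt (2 * π / ((B ω) ^ 2 + y)) * Real.exp ((A ω) ^ 2 / (2 * ((B ω) ^ 2 + y)))
    with hg
  have hgmeas : Measurable g := by
    apply Measurable.mul
    · exact (measurable_const.div ((hB.pow_const 2).add_const y)).sqrt
    · exact (((hA.pow_const 2)).div ((((hB.pow_const 2).add_const y)).const_mul 2)).exp
  -- the key mixture bound
  have key : ∫⁻ ω, ENNReal.ofReal (g ω) ∂μ ≤ ENNReal.ofReal (Real.sqrt (2 * π / y)) := by
    have hFmeas : Measurable (Function.uncurry fun (ω : Ω) (lam : ℝ) =>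
        ENNReal.ofReal (Real.exp (-(((B ω) ^ 2 + y) / 2) * lam ^ 2 + A ω * lam))) := by
      apply Measurable.ennreal_ofReal
      apply Measurable.exp
      exact ((((((hB.comp measurable_fst).pow_const 2).add_const y).div_const 2).neg).mul
        (measurable_snd.pow_const 2)).add ((hA.comp measurable_fst).mul measurable_snd)
    have inner : ∀ ω, (∫⁻ lam : ℝ,
        ENNReal.ofReal (Real.exp (-(((B ω) ^ 2 + y) / 2) * lam ^ 2 + A ω * lam)))
        = ENNReal.ofReal (g ω) := fun ω => by
      have hc : 0 < ((B ω) ^ 2 + y) / 2 := by positivity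
      rw [← ofReal_integral_eq_lintegral_ofReal (integrable_rexp_quad hc (A ω))
          (Filter.Eventually.of_forall fun l => (Real.exp_pos _).le),
        integral_rexp_quad hc (A ω)]
      rw [hg]
      congr 2
      · congr 1
        field_simp
      · congr 1
        field_simp
        ring
    calc ∫⁻ ω, ENNReal.ofReal (g ω) ∂μ
        = ∫⁻ ω, ∫⁻ lam : ℝ,
            ENNReal.ofReal (Real.exp (-(((B ω) ^ 2 + y) / 2) * lam ^ 2 + A ω * lam))
            ∂volume ∂μ := by
          exact (lintegral_congr inner).symm
      _ = ∫⁻ lam : ℝ, ∫⁻ ω,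
            ENNReal.ofReal (Real.exp (-(((B ω) ^ 2 + y) / 2) * lam ^ 2 + A ω * lam)) ∂μ
            ∂volume :=
          lintegral_lintegral_swap hFmeas.aemeasurable
      _ ≤ ∫⁻ lam : ℝ, ENNReal.ofReal (Real.exp (-(y / 2) * lam ^ 2 + 0 * lam)) ∂volume := by
          refine lintegral_mono fun lam => ?_
          have hsplit : ∀ ω : Ω,
              ENNReal.ofReal (Real.exp (-(((B ω) ^ 2 + y) / 2) * lam ^ 2 + A ω * lam))
              = ENNReal.ofReal (Real.exp (lam * A ω - lam ^ 2 * (B ω) ^ 2 / 2)) *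
              ENNReal.ofReal (Real.exp (-(y / 2) * lam ^ 2)) := fun ω => by
            rw [← ENNReal.ofReal_mul (Real.exp_pos _).le, ← Real.exp_add]
            congr 2
            ring
          rw [lintegral_congr hsplit, lintegral_mul_const' _ _ ENNReal.ofReal_ne_top]
          calc _ ≤ 1 * ENNReal.ofReal (Real.exp (-(y / 2) * lam ^ 2)) :=
                mul_le_mul_left (h14 lam) _
            _ = ENNReal.ofReal (Real.exp (-(y / 2) * lam ^ 2 + 0 * lam)) := by
                rw [one_mul]; norm_num
      _ = ENNReal.ofReal (Real.sqrt (2 * π / y)) := by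
          rw [← ofReal_integral_eq_lintegral_ofReal
            (integrable_rexp_quad (by positivity : (0:ℝ) < y / 2) 0)
            (Filter.Eventually.of_forall fun l => (Real.exp_pos _).le),
            integral_rexp_quad (by positivity : (0:ℝ) < y / 2) 0]
          norm_num
          congr 1
          field_simp
  -- Markov
  set c0 := ENNReal.ofReal (Real.sqrt (2 * π / y) * Real.exp (x ^ 2 / 2)) with hc0
  have hc0pos : c0 ≠ 0 := by
    rw [hc0]
    exact (ENNReal.ofReal_pos.mpr (by positivity)).ne'
  have hsub : {ω | x ≤ |A ω| /
      Real.sqrt (((B ω) ^ 2 + y) * (1 + (1 / 2) * Real.log ((B ω) ^ 2 / y + 1)))} ⊆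
      {ω | c0 ≤ ENNReal.ofReal (g ω)} := fun ω hω =>
    ENNReal.ofReal_le_ofReal (event_ineq hy hx hω)
  have markov := mul_meas_ge_le_lintegral₀
    (hgmeas.ennreal_ofReal.aemeasurable (μ := μ)) c0
  have hmain : c0 * μ {ω | x ≤ |A ω| /
      Real.sqrt (((B ω) ^ 2 + y) * (1 + (1 / 2) * Real.log ((B ω) ^ 2 / y + 1)))} ≤
      ENNReal.ofReal (Real.sqrt (2 * π / y)) :=
    le_trans (mul_le_mul_right (measure_mono hsub) c0) (le_trans markov key)
  rw [← ENNReal.mul_le_mul_iff_right hc0pos ENNReal.ofReal_ne_top]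
  refine le_trans hmain (le_of_eq ?_)
  rw [hc0, ← ENNReal.ofReal_mul (by positivity)]
  congr 1
  rw [mul_assoc, ← Real.exp_add,
    show x ^ 2 / 2 + -x ^ 2 / 2 = 0 by ring, Real.exp_zero, mul_one]
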